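/- Any q-deformed 2-cocycle ψ_q on the centerless q-deformed W algebra satisfies ψ_q(L_0, W_0) = 0, provided q is not a root of unity. -/

import Mathlib

/-- The q-number [n]_q = (q^n - 1)/(q - 1). -/
noncomputable def qnum (q : ℂ) (n : ℤ) : ℂ := (q ^ n - 1) / (q - 1)

/-- The underlying space of the centerless q-deformed W algebra. -/
abbrev WSpace : Type := (ℤ ⊕ ℤ) →₀ ℂ

/-- The basis element `L m`. -/
noncomputable def Lb (m : ℤ) : WSpace := Finsupp.single (Sum.inl m) 1

/-- The basis element `W m`. -/
noncomputable def Wb (m : ℤ) : WSpace := Finsupp.single (Sum.inr m) 1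

/-- Any q-deformed 2-cocycle on the centerless q-deformed W algebra satisfies
`ψ(L₀, W₀) = 0`, provided `q` is not a root of unity. -/
theorem cocycle_L0_W0_eq_zero (q : ℂ) (hq0 : q ≠ 0)
    (hgen : ∀ n : ℕ, n ≠ 0 → q ^ n ≠ 1)
    (B : WSpace →ₗ[ℂ] WSpace →ₗ[ℂ] WSpace) (f : WSpace →ₗ[ℂ] WSpace)
    (hLL : ∀ m n : ℤ, B (Lb m) (Lb n) = (qnum q m - qnum q n) • Lb (m + n))
    (hLW : ∀ m n : ℤ, B (Lb m) (Wb n) = (qnum q m - qnum q n) • Wb (m + n))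
    (hWL : ∀ m n : ℤ, B (Wb m) (Lb n) = (qnum q n - qnum q m) • Wb (m + n))
    (hWW : ∀ m n : ℤ, B (Wb m) (Wb n) = 0)
    (hfL : ∀ m : ℤ, f (Lb m) = (q ^ m + 1) • Lb m)
    (hfW : ∀ m : ℤ, f (Wb m) = (q ^ m + 1) • Wb m)
    (ψ : WSpace →ₗ[ℂ] WSpace →ₗ[ℂ] ℂ)
    (hskew : ∀ u v : WSpace, ψ u v = -ψ v u)
    (hcoc : ∀ u v w : WSpace,
      ψ (f u) (B v w) + ψ (f w) (B u v) + ψ (f v) (B w u) = 0) :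
    ψ (Lb 0) (Wb 0) = 0 := by
  have hq1 : q - 1 ≠ 0 := by
    intro h
    exact hgen 1 one_ne_zero (by rw [pow_one]; linear_combination h)
  have hqn1 : q + 1 ≠ 0 := by
    intro h
    exact hgen 2 two_ne_zero (by ring_nf; linear_combination (q - 1) * h)
  have e1 := hcoc (Lb 0) (Lb 1) (Wb (-1))
  have e2 := hcoc (Lb 0) (Lb (-1)) (Wb 1)
  have e3 := hcoc (Wb 0) (Lb 1) (Lb (-1))
  simp only [hfL, hfW, hLL, hLW, hWL, hWW, map_smul, LinearMap.smul_apply,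
    smul_eq_mul, map_zero, LinearMap.zero_apply] at e1 e2 e3
  norm_num at e1 e2 e3
  rw [hskew (Wb (-1)) (Lb 1)] at e1
  rw [hskew (Wb 1) (Lb (-1))] at e2
  rw [hskew (Wb 0) (Lb 0)] at e3
  set x := ψ (Lb 0) (Wb 0)
  set a := ψ (Lb 1) (Wb (-1))
  set b := ψ (Lb (-1)) (Wb 1)
  simp only [qnum] at e1 e2 e3
  norm_num [zpow_neg] at e1 e2 e3
  field_simp at e1 e2 e3
  have hne : (2:ℂ)*q^2*(q-1)^2*(q+1) ≠ 0 :=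
    mul_ne_zero (mul_ne_zero (mul_ne_zero two_ne_zero (pow_ne_zero _ hq0))
      (pow_ne_zero _ hq1)) hqn1
  have hne2 : (2:ℂ)*q*(q-1)*(q+1) ≠ 0 :=
    mul_ne_zero (mul_ne_zero (mul_ne_zero two_ne_zero hq0) hq1) hqn1
  have k1 : 2*q^2*(q-1)^2*(q+1)*(x+a) = 0 := by linear_combination q^2*(q-1)*e1
  have k2 : 2*q*(q-1)*(q+1)*(x+b) = 0 := by linear_combination -q*e2
  have k3 : 2*q^2*(q-1)^2*(q+1)*(-2*x - a + b) = 0 := by linear_combination 2*q^2*(q-1)*e3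
  have h1 : x + a = 0 := (mul_eq_zero.mp k1).resolve_left hne
  have h2 : x + b = 0 := (mul_eq_zero.mp k2).resolve_left hne2
  have h3 : -2*x - a + b = 0 := (mul_eq_zero.mp k3).resolve_left hne
  linear_combination (-h1 + h2 - h3)/2
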